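/- Let Σₙ = {a₁,…,aₙ} with n ∣ a_j for all j, and let w be a two-times differentiable well-proportioned infinite word over Σₙ. Then for each i, lim_{k→∞} |Pref_k(w)|_{a_i} / k = 1/n. -/

import Mathlib

/-- Partial sums of a sequence of run lengths. -/
def partialSum (t : ℕ → ℕ) : ℕ → ℕ
  | 0 => 0
  | k + 1 => partialSum t k + t k

/-- `w` decomposes into maximal runs with base sequence `α` and run-length
sequence `t`. -/
def IsRunDecomp (w α t : ℕ → ℕ) : Prop :=
  (∀ k, 1 ≤ t k) ∧ (∀ k, α k ≠ α (k + 1)) ∧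
    ∀ k i, partialSum t k ≤ i → i < partialSum t (k + 1) → w i = α k

/-- `t` is the run-length sequence Δ(w) of the infinite word `w`. -/
def IsDelta (w t : ℕ → ℕ) : Prop := ∃ α, IsRunDecomp w α t

/-- The prefix of length `k` of an infinite word. -/
def pref (w : ℕ → ℕ) (k : ℕ) : List ℕ := (List.range k).map w

namespace Stmt16Aux

def cnt (w : ℕ → ℕ) (v K : ℕ) : ℕ := (pref w K).count v

lemma partialSum_succ (t : ℕ → ℕ) (k : ℕ) :
    partialSum t (k + 1) = partialSum t k + t k := rfl

lemma partialSum_mono (t : ℕ → ℕ) : Monotone (partialSum t) :=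
  monotone_nat_of_le_succ fun k => Nat.le_add_right _ _

lemma le_partialSum (t : ℕ → ℕ) (h : ∀ k, 1 ≤ t k) : ∀ k, k ≤ partialSum t k := by
  intro k
  induction k with
  | zero => simp [partialSum]
  | succ k ih => have := h k; rw [partialSum_succ]; omega

lemma exists_run (t : ℕ → ℕ) (h : ∀ k, 1 ≤ t k) (x : ℕ) :
    ∃ k, partialSum t k ≤ x ∧ x < partialSum t (k + 1) := by
  have hne : ∃ k, x < partialSum t (k + 1) :=
    ⟨x, lt_of_lt_of_le (Nat.lt_succ_self x) (le_partialSum t h (x + 1))⟩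
  classical
  refine ⟨Nat.find hne, ?_, Nat.find_spec hne⟩
  rcases Nat.eq_zero_or_pos (Nat.find hne) with h0 | h0
  · rw [h0]; simp [partialSum]
  · obtain ⟨k, hk⟩ := Nat.exists_eq_add_of_lt h0
    have hlt := Nat.find_min hne (m := k) (by omega)
    rw [hk]
    have : ¬ x < partialSum t (k + 1) := by simpa using hlt
    simpa [Nat.add_comm] using Nat.le_of_not_lt this

lemma partialSum_add (t : ℕ → ℕ) (r s : ℕ) :
    partialSum t (r + s) = partialSum t r + ∑ m ∈ Finset.range s, t (r + m) := by
  induction s with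
  | zero => simp
  | succ s ih =>
    rw [← Nat.add_assoc, partialSum_succ, ih, Finset.sum_range_succ]
    omega

lemma cnt_zero (w : ℕ → ℕ) (v : ℕ) : cnt w v 0 = 0 := by simp [cnt, pref]

lemma cnt_succ (w : ℕ → ℕ) (v K : ℕ) :
    cnt w v (K + 1) = cnt w v K + if w K = v then 1 else 0 := by
  simp [cnt, pref, List.range_succ, List.count_append, List.count_singleton']

lemma cnt_mono (w : ℕ → ℕ) (v : ℕ) : Monotone (cnt w v) :=
  monotone_nat_of_le_succ fun K => by rw [cnt_succ]; omega

lemma cnt_run (w α t : ℕ → ℕ) (hrd : IsRunDecomp w α t) (v r : ℕ) :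
    cnt w v (partialSum t (r + 1)) =
      cnt w v (partialSum t r) + (if α r = v then t r else 0) := by
  obtain ⟨h1, -, h3⟩ := hrd
  have key : ∀ d, d ≤ t r → cnt w v (partialSum t r + d) =
      cnt w v (partialSum t r) + (if α r = v then d else 0) := by
    intro d hd
    induction d with
    | zero => simp
    | succ d ih =>
      rw [← Nat.add_assoc, cnt_succ, ih (by omega)]
      have hwv : w (partialSum t r + d) = α r :=
        h3 r _ (Nat.le_add_right _ _) (by rw [partialSum_succ]; omega)
      rw [hwv]
      by_cases hv : α r = v <;> simp [hv] <;> omega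
  rw [partialSum_succ]
  exact key (t r) le_rfl

lemma cnt_blocks (w α t : ℕ → ℕ) (hrd : IsRunDecomp w α t) (v r s : ℕ) :
    cnt w v (partialSum t (r + s)) = cnt w v (partialSum t r) +
      ∑ m ∈ Finset.range s, if α (r + m) = v then t (r + m) else 0 := by
  induction s with
  | zero => simp
  | succ s ih =>
    rw [← Nat.add_assoc, cnt_run w α t hrd v (r + s), ih, Finset.sum_range_succ]
    omega

end Stmt16Aux

/-- Let `Σₙ = {a 1, …, a n}` with `n ∣ a j` for all `j`, and let `w` be a
two-times differentiable well-proportioned infinite word over `Σₙ` (the run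
base sequence `α` of `w` enumerates the whole alphabet on each consecutive
`n`-block, `Δ(w) = t` and `Δ²(w) = d2` are infinite words over `Σₙ`). Then
each letter occurs in `w` with frequency `1/n`. -/
theorem stmt16 (n : ℕ) (hn : 0 < n) (a : Fin n → ℕ)
    (hinj : Function.Injective a) (hdvd : ∀ j, n ∣ a j) (hpos : ∀ j, 0 < a j)
    (w : ℕ → ℕ) (hw : ∀ i, ∃ j, w i = a j)
    (α t d2 : ℕ → ℕ) (hrd : IsRunDecomp w α t)
    (ht : ∀ i, ∃ j, t i = a j)
    (hd2 : IsDelta t d2) (hd2a : ∀ i, ∃ j, d2 i = a j)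
    (hwp : ∀ i : ℕ, ∀ j : Fin n, ∃ m : Fin n, α (i * n + m) = a j) :
    ∀ j : Fin n,
      Filter.Tendsto (fun k => ((pref w k).count (a j) : ℝ) / k)
        Filter.atTop (nhds (1 / n)) := by
  intro j
  classical
  obtain ⟨ht1, hαne, hwrun⟩ := hrd
  obtain ⟨β, hd1, hβne, htrun⟩ := hd2
  set M := Finset.univ.sup a with hMdef
  have haM : ∀ j', a j' ≤ M := fun j' => Finset.le_sup (Finset.mem_univ j')
  have htM : ∀ r, t r ≤ M := fun r => by
    obtain ⟨j', hj'⟩ := ht r; rw [hj']; exact haM j'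
  have hQdvd : ∀ k, n ∣ partialSum d2 k := by
    intro k
    induction k with
    | zero => simp [partialSum]
    | succ k ih =>
      rw [Stmt16Aux.partialSum_succ]
      obtain ⟨j', hj'⟩ := hd2a k
      exact Nat.dvd_add ih (hj' ▸ hdvd j')
  have hconst : ∀ i m, m < n → t (i * n + m) = t (i * n) := by
    intro i m hm
    obtain ⟨k, h1, h2⟩ := Stmt16Aux.exists_run d2 hd1 (i * n)
    have h3 : i * n + m < partialSum d2 (k + 1) := by
      obtain ⟨q, hq⟩ := hQdvd (k + 1)
      rw [hq] at h2 ⊢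
      have hiq : i + 1 ≤ q := by
        by_contra hc
        push_neg at hc
        have hle : n * q ≤ n * i := Nat.mul_le_mul_left n (by omega)
        have hco : n * i = i * n := Nat.mul_comm n i
        omega
      have f1 : (i + 1) * n ≤ q * n := Nat.mul_le_mul_right n hiq
      have f2 : (i + 1) * n = i * n + n := Nat.succ_mul i n
      have f3 : q * n = n * q := Nat.mul_comm q n
      omega
    rw [htrun k _ (le_trans h1 (Nat.le_add_right _ _)) h3, htrun k _ h1 h2]
  have hPlt : ∀ r, partialSum t r < partialSum t (r + 1) := fun r => by
    rw [Stmt16Aux.partialSum_succ]; have := ht1 r; omega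
  have hαval : ∀ r, ∃ j', α r = a j' := by
    intro r
    obtain ⟨j', hj'⟩ := hw (partialSum t r)
    exact ⟨j', by rw [← hwrun r _ le_rfl (hPlt r), hj']⟩
  have huniq : ∀ i : ℕ, ∃! m : Fin n, α (i * n + (m : ℕ)) = a j := by
    intro i
    choose g hg using fun m : Fin n => hαval (i * n + (m : ℕ))
    have hsurj : Function.Surjective g := by
      intro j'
      obtain ⟨m, hm⟩ := hwp i j'
      exact ⟨m, hinj (by rw [← hg m, hm])⟩
    have hinjg : Function.Injective g := Finite.injective_iff_surjective.mpr hsurj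
    obtain ⟨m0, hm0⟩ := hsurj j
    refine ⟨m0, ?_, ?_⟩
    · show α (i * n + (m0 : ℕ)) = a j
      rw [hg m0, hm0]
    intro m' hm'
    apply hinjg
    rw [hm0]
    exact hinj ((hg m').symm.trans hm')
  have hblocksum : ∀ i,
      (∑ m ∈ Finset.range n, if α (i * n + m) = a j then t (i * n + m) else 0)
        = t (i * n) := by
    intro i
    obtain ⟨m0, hm0, hm0u⟩ := huniq i
    have hcong : ∀ m ∈ Finset.range n,
        (if α (i * n + m) = a j then t (i * n + m) else 0)
          = if m = (m0 : ℕ) then t (i * n) else 0 := by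
      intro m hm
      rw [Finset.mem_range] at hm
      by_cases hc : α (i * n + m) = a j
      · have hmm : (⟨m, hm⟩ : Fin n) = m0 := hm0u ⟨m, hm⟩ hc
        have hmv : m = (m0 : ℕ) := by rw [← hmm]
        rw [if_pos hc, if_pos hmv]
        exact hconst i m hm
      · have hne' : m ≠ (m0 : ℕ) := by
          intro he; apply hc; rw [he]; exact hm0
        simp [hc, hne']
    rw [Finset.sum_congr rfl hcong,
      Finset.sum_ite_eq' (Finset.range n) ((m0 : ℕ)) (fun _ => t (i * n))]
    simp [m0.isLt]
  have hrd' : IsRunDecomp w α t := ⟨ht1, hαne, hwrun⟩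
  have hPstep : ∀ i, partialSum t ((i + 1) * n)
      = partialSum t (i * n) + n * t (i * n) := by
    intro i
    rw [Nat.succ_mul, Stmt16Aux.partialSum_add]
    congr 1
    rw [Finset.sum_congr rfl (fun m hm => hconst i m (Finset.mem_range.mp hm))]
    simp [Finset.sum_const, Nat.mul_comm]
  have hCstep : ∀ i, Stmt16Aux.cnt w (a j) (partialSum t ((i + 1) * n))
      = Stmt16Aux.cnt w (a j) (partialSum t (i * n)) + t (i * n) := by
    intro i
    rw [Nat.succ_mul, Stmt16Aux.cnt_blocks w α t hrd' (a j) (i * n) n, hblocksum i]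
  have key : ∀ i, Stmt16Aux.cnt w (a j) (partialSum t (i * n)) * n
      = partialSum t (i * n) := by
    intro i
    induction i with
    | zero =>
      simp only [Nat.zero_mul]
      rw [show partialSum t 0 = 0 from rfl, Stmt16Aux.cnt_zero, Nat.zero_mul]
    | succ i ih =>
      rw [hCstep i, hPstep i, Nat.add_mul, ih, Nat.mul_comm (t (i * n)) n]
  have bound : ∀ K, K ≤ n * Stmt16Aux.cnt w (a j) K + n * M ∧
      n * Stmt16Aux.cnt w (a j) K ≤ K + n * M := by
    intro K
    set t' : ℕ → ℕ := fun i => ∑ m ∈ Finset.range n, t (i * n + m) with ht'def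
    have hP' : ∀ i, partialSum t' i = partialSum t (i * n) := by
      intro i
      induction i with
      | zero => simp [partialSum]
      | succ i ih =>
        rw [Stmt16Aux.partialSum_succ, ih, Nat.succ_mul, Stmt16Aux.partialSum_add]
    have ht'1 : ∀ i, 1 ≤ t' i := by
      intro i
      have h0 : t (i * n + 0) ≤ t' i :=
        Finset.single_le_sum (f := fun m => t (i * n + m))
          (fun _ _ => Nat.zero_le _) (Finset.mem_range.mpr hn)
      have := ht1 (i * n + 0)
      omega
    obtain ⟨i, h1, h2⟩ := Stmt16Aux.exists_run t' ht'1 K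
    rw [hP'] at h1
    rw [hP'] at h2
    have e1 := key i
    have e2 := key (i + 1)
    have hs := hPstep i
    have hM := htM (i * n)
    have m1 := Stmt16Aux.cnt_mono w (a j) h1
    have m2 := Stmt16Aux.cnt_mono w (a j) (le_of_lt h2)
    have f1 : Stmt16Aux.cnt w (a j) (partialSum t (i * n)) * n
        ≤ Stmt16Aux.cnt w (a j) K * n := Nat.mul_le_mul m1 le_rfl
    have f2 : Stmt16Aux.cnt w (a j) K * n
        ≤ Stmt16Aux.cnt w (a j) (partialSum t ((i + 1) * n)) * n :=
      Nat.mul_le_mul m2 le_rfl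
    have f3 : n * t (i * n) ≤ n * M := Nat.mul_le_mul le_rfl hM
    have hc : n * Stmt16Aux.cnt w (a j) K = Stmt16Aux.cnt w (a j) K * n :=
      Nat.mul_comm _ _
    omega
  have hn0 : (0 : ℝ) < n := by exact_mod_cast hn
  have hMlim : Filter.Tendsto (fun K : ℕ => (M : ℝ) / K) Filter.atTop (nhds 0) :=
    tendsto_const_div_atTop_nhds_zero_nat (M : ℝ)
  have hlo : Filter.Tendsto (fun K : ℕ => 1 / (n : ℝ) - M / K) Filter.atTop
      (nhds (1 / n)) := by
    simpa using (tendsto_const_nhds (x := 1 / (n : ℝ))).sub hMlim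
  have hhi : Filter.Tendsto (fun K : ℕ => 1 / (n : ℝ) + M / K) Filter.atTop
      (nhds (1 / n)) := by
    simpa using (tendsto_const_nhds (x := 1 / (n : ℝ))).add hMlim
  apply tendsto_of_tendsto_of_tendsto_of_le_of_le' hlo hhi
  · filter_upwards [Filter.eventually_ge_atTop 1] with K hK
    have hK0 : (0 : ℝ) < K := by exact_mod_cast hK
    have hb := (bound K).1
    have hb' : (K : ℝ) ≤ n * ((pref w K).count (a j)) + n * M := by
      exact_mod_cast hb
    rw [div_sub_div _ _ (ne_of_gt hn0) (ne_of_gt hK0),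
      div_le_div_iff₀ (by positivity) hK0]
    nlinarith [mul_le_mul_of_nonneg_right hb' (le_of_lt hK0)]
  · filter_upwards [Filter.eventually_ge_atTop 1] with K hK
    have hK0 : (0 : ℝ) < K := by exact_mod_cast hK
    have hb := (bound K).2
    have hb' : (n : ℝ) * ((pref w K).count (a j)) ≤ K + n * M := by
      exact_mod_cast hb
    rw [div_add_div _ _ (ne_of_gt hn0) (ne_of_gt hK0),
      div_le_div_iff₀ hK0 (by positivity)]
    nlinarith [mul_le_mul_of_nonneg_right hb' (le_of_lt hK0)]
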